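/- arXiv:math/9805125 — 3 statements merged into one kernel-verified Lean document; each statement's English description precedes it below -/
import Mathlib

section
/- Let θ ∈ ℝ and let x, y ∈ ℝ with y ≠ 0. Then A_θ(x + iy) is real if and only if cos(2πx) = −2πy / sinh(2πy). Consequently the full preimage of the real axis under A_θ consists of ℝ together with the set of points x + iy, y ≠ 0, satisfying this equation. -/
/-- The Arnold (standard) map `A_θ(z) = z + θ + sin(2πz)/(2π)` as an entire function. -/
noncomputable def arnoldC (θ : ℂ) (z : ℂ) : ℂ :=
  z + θ + Complex.sin (2 * (Real.pi : ℂ) * z) / (2 * (Real.pi : ℂ))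

lemma arnoldC_im (θ : ℝ) (z : ℂ) :
    (arnoldC (θ : ℂ) z).im
      = z.im + Real.cos (2 * Real.pi * z.re) * Real.sinh (2 * Real.pi * z.im) / (2 * Real.pi) := by
  have hz : 2 * (Real.pi : ℂ) * z
      = ((2 * Real.pi * z.re : ℝ) : ℂ) + ((2 * Real.pi * z.im : ℝ) : ℂ) * Complex.I := by
    refine Complex.ext ?_ ?_ <;> simp [Complex.mul_re, Complex.mul_im]
  have h2 : (2 * (Real.pi : ℂ)) = ((2 * Real.pi : ℝ) : ℂ) := by push_cast; ring
  rw [arnoldC, hz, Complex.sin_add_mul_I, h2, ← Complex.ofReal_sin, ← Complex.ofReal_cos,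
    ← Complex.ofReal_sinh, ← Complex.ofReal_cosh]
  simp only [← Complex.ofReal_mul, Complex.add_im, Complex.div_ofReal_im, Complex.ofReal_im,
    Complex.mul_I_im, Complex.ofReal_re]
  ring

lemma arnoldC_im_iff (θ : ℝ) (z : ℂ) (hy : z.im ≠ 0) :
    (arnoldC (θ : ℂ) z).im = 0 ↔
      Real.cos (2 * Real.pi * z.re) = -(2 * Real.pi * z.im) / Real.sinh (2 * Real.pi * z.im) := by
  have hs : Real.sinh (2 * Real.pi * z.im) ≠ 0 := by
    simp only [ne_eq, Real.sinh_eq_zero]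
    exact fun h => hy (by
      have := mul_eq_zero.mp h
      rcases this with h' | h'
      · exact absurd h' (by positivity)
      · exact h')
  rw [arnoldC_im]
  have hπ : (2 * Real.pi) ≠ 0 := by positivity
  rw [eq_div_iff hs]
  constructor
  · intro h
    field_simp at h ⊢
    linarith
  · intro h
    field_simp
    rw [show z.im * 2 * Real.pi = 2 * Real.pi * z.im by ring]
    linarith

/-- Let `θ ∈ ℝ` and `x, y ∈ ℝ` with `y ≠ 0`. Then `A_θ(x + iy)` is real iff
`cos(2πx) = −2πy / sinh(2πy)`. Consequently the full preimage of the real axis under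
`A_θ` consists of `ℝ` together with the points `x + iy`, `y ≠ 0`, satisfying this
equation. -/
theorem arnold_preimage_real_axis (θ : ℝ) :
    (∀ x y : ℝ, y ≠ 0 →
      ((arnoldC (θ : ℂ) ((x : ℂ) + (y : ℂ) * Complex.I)).im = 0 ↔
        Real.cos (2 * Real.pi * x) = -(2 * Real.pi * y) / Real.sinh (2 * Real.pi * y))) ∧
    (∀ z : ℂ, (arnoldC (θ : ℂ) z).im = 0 ↔
      z.im = 0 ∨ (z.im ≠ 0 ∧
        Real.cos (2 * Real.pi * z.re) = -(2 * Real.pi * z.im) / Real.sinh (2 * Real.pi * z.im))) := by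
  constructor
  · intro x y hy
    have h := arnoldC_im_iff θ ((x : ℂ) + (y : ℂ) * Complex.I) (by simpa using hy)
    simpa using h
  · intro z
    by_cases hy : z.im = 0
    · simp [arnoldC_im, hy]
    · rw [arnoldC_im_iff θ z hy]
      simp [hy]
end

section
/- Let θ ∈ ℝ and y > 0. Then 0 < 2πy/sinh(2πy) < 1, and for x ∈ ℝ the point A_θ(x + iy) is real if and only if there exists k ∈ ℤ such that x = k + (1/(2π))·arccos(−2πy/sinh(2πy)) or x = k − (1/(2π))·arccos(−2πy/sinh(2πy)). Thus at each height y > 0 the preimage of ℝ under A_θ meets the horizontal line Im z = y in exactly two points modulo ℤ, lying on the analytic curves Γ^k_± : Re z = k ± (1/(2π))·arccos(−2π Im z / sinh(2π Im z)). -/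
/-- Let `θ ∈ ℝ` and `y > 0`. Then `0 < 2πy/sinh(2πy) < 1`, and for `x ∈ ℝ`
the point `A_θ(x + iy)` is real iff there is `k ∈ ℤ` with
`x = k ± (1/(2π))·arccos(−2πy/sinh(2πy))`. Thus at each height `y > 0` the preimage of
`ℝ` under `A_θ` meets the line `Im z = y` in exactly two points modulo `ℤ`, lying on the
analytic curves `Γ^k_± : Re z = k ± (1/(2π))·arccos(−2π Im z / sinh(2π Im z))`. -/
theorem arnold_preimage_curves (θ y : ℝ) (hy : 0 < y) :
    (0 < 2 * Real.pi * y / Real.sinh (2 * Real.pi * y) ∧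
      2 * Real.pi * y / Real.sinh (2 * Real.pi * y) < 1) ∧
    (∀ x : ℝ, (arnoldC (θ : ℂ) ((x : ℂ) + (y : ℂ) * Complex.I)).im = 0 ↔
      ∃ k : ℤ,
        x = (k : ℝ) + (1 / (2 * Real.pi)) *
            Real.arccos (-(2 * Real.pi * y) / Real.sinh (2 * Real.pi * y)) ∨
        x = (k : ℝ) - (1 / (2 * Real.pi)) *
            Real.arccos (-(2 * Real.pi * y) / Real.sinh (2 * Real.pi * y))) := by
  have hπ : 0 < Real.pi := Real.pi_pos
  have h2π : (2 * Real.pi) ≠ 0 := by positivity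
  have htpos : 0 < 2 * Real.pi * y := by positivity
  have hts : 2 * Real.pi * y < Real.sinh (2 * Real.pi * y) :=
    (Real.self_lt_sinh_iff).2 htpos
  have hs : 0 < Real.sinh (2 * Real.pi * y) := htpos.trans hts
  have h1 : 0 < 2 * Real.pi * y / Real.sinh (2 * Real.pi * y) := div_pos htpos hs
  have h2 : 2 * Real.pi * y / Real.sinh (2 * Real.pi * y) < 1 := (div_lt_one hs).2 hts
  set c : ℝ := -(2 * Real.pi * y) / Real.sinh (2 * Real.pi * y) with hc
  have hc1 : -1 ≤ c := by rw [hc, neg_div]; linarith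
  have hc2 : c ≤ 1 := by rw [hc, neg_div]; linarith
  have hcosc : Real.cos (Real.arccos c) = c := Real.cos_arccos hc1 hc2
  refine ⟨⟨h1, h2⟩, fun x => ?_⟩
  have him : (arnoldC (θ : ℂ) ((x : ℂ) + (y : ℂ) * Complex.I)).im
      = y + Real.cos (2 * Real.pi * x) * Real.sinh (2 * Real.pi * y) / (2 * Real.pi) := by
    have e1 : 2 * (Real.pi : ℂ) * ((x : ℂ) + (y : ℂ) * Complex.I)
        = ((2 * Real.pi * x : ℝ) : ℂ) + ((2 * Real.pi * y : ℝ) : ℂ) * Complex.I := by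
      push_cast; ring
    have e2 : Complex.sin (((2 * Real.pi * x : ℝ) : ℂ) + ((2 * Real.pi * y : ℝ) : ℂ) * Complex.I)
        = ((Real.sin (2 * Real.pi * x) * Real.cosh (2 * Real.pi * y) : ℝ) : ℂ)
          + ((Real.cos (2 * Real.pi * x) * Real.sinh (2 * Real.pi * y) : ℝ) : ℂ) * Complex.I := by
      rw [Complex.sin_add, Complex.sin_mul_I, Complex.cos_mul_I]
      push_cast; ring
    have e3 : arnoldC (θ : ℂ) ((x : ℂ) + (y : ℂ) * Complex.I)
        = ((x + θ + Real.sin (2 * Real.pi * x) * Real.cosh (2 * Real.pi * y) / (2 * Real.pi) : ℝ) : ℂ)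
          + ((y + Real.cos (2 * Real.pi * x) * Real.sinh (2 * Real.pi * y) / (2 * Real.pi) : ℝ) : ℂ)
            * Complex.I := by
      have hπC : (Real.pi : ℂ) ≠ 0 := by exact_mod_cast hπ.ne'
      rw [arnoldC, e1, e2]
      push_cast
      field_simp
      ring
    rw [e3]
    simp only [Complex.add_im, Complex.ofReal_im, Complex.mul_im, Complex.ofReal_re,
      Complex.I_im, Complex.I_re, mul_one, mul_zero, zero_add, add_zero]
  rw [him]
  have key : y + Real.cos (2 * Real.pi * x) * Real.sinh (2 * Real.pi * y) / (2 * Real.pi) = 0 ↔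
      Real.cos (2 * Real.pi * x) = Real.cos (Real.arccos c) := by
    rw [hcosc, hc, eq_div_iff hs.ne']
    constructor
    · intro h
      have h' : y * (2 * Real.pi)
          + Real.cos (2 * Real.pi * x) * Real.sinh (2 * Real.pi * y) = 0 := by
        have := congrArg (fun r => r * (2 * Real.pi)) h
        simpa [add_mul, div_mul_cancel₀ _ h2π] using this
      linarith
    · intro h
      have h' : y + Real.cos (2 * Real.pi * x) * Real.sinh (2 * Real.pi * y) / (2 * Real.pi)
          = (y * (2 * Real.pi) + Real.cos (2 * Real.pi * x) * Real.sinh (2 * Real.pi * y))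
            / (2 * Real.pi) := by
        field_simp
      rw [h', div_eq_zero_iff]
      left; linarith
  rw [key, Real.cos_eq_cos_iff]
  constructor
  · rintro ⟨k, h | h⟩
    · refine ⟨-k, Or.inl ?_⟩
      push_cast
      rw [eq_comm, h]
      field_simp
      ring
    · refine ⟨k, Or.inr ?_⟩
      rw [eq_comm, h]
      field_simp
      ring
  · rintro ⟨k, h | h⟩
    · refine ⟨-k, Or.inl ?_⟩
      rw [h]; push_cast; field_simp; ring
    · refine ⟨k, Or.inr ?_⟩
      rw [h]; field_simp; ring
end

section
/- A holomorphic self-map of the doubly slit plane cannot have two distinct parabolic fixed points on the slit interval: let a < b be real numbers, let Ω = ℂ \ ((−∞, a] ∪ [b, +∞)), let U ⊆ ℂ be an open set containing Ω ∪ {a, b}, and let φ : U → ℂ be holomorphic with φ(Ω) ⊆ Ω, φ([a, b]) ⊆ [a, b], φ(a) = a, φ(b) = b, φ′(a) = 1 and φ′(b) = 1. Then φ(z) = z for all z ∈ Ω. -/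
open Complex Set Filter Topology Metric

noncomputable def slitE (w : ℂ) : ℂ := (Complex.exp (w/2) - 1) / (Complex.exp (w/2) + 1)
noncomputable def slitA (z : ℂ) : ℂ := 2 * Complex.log ((1 + z)/(1 - z))
def slitS : Set ℂ := {w : ℂ | -Real.pi < w.im ∧ w.im < Real.pi}

lemma slitS_re_exp_half_pos {w : ℂ} (hw : w ∈ slitS) : 0 < (Complex.exp (w/2)).re := by
  obtain ⟨h1, h2⟩ := hw
  rw [Complex.exp_re]
  have him : (w/2).im = w.im / 2 := by
    simp [Complex.div_im]
  apply mul_pos (Real.exp_pos _)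
  rw [him]
  apply Real.cos_pos_of_mem_Ioo
  rw [Set.mem_Ioo]
  constructor <;> linarith

lemma slitE_denom_ne {w : ℂ} (hw : w ∈ slitS) : Complex.exp (w/2) + 1 ≠ 0 := by
  intro h
  have h2 : (Complex.exp (w/2) + 1).re = (Complex.exp (w/2)).re + 1 := by simp
  rw [h] at h2
  simp at h2
  linarith [slitS_re_exp_half_pos hw]

lemma abs_lt_abs_of_re_pos {e : ℂ} (he : 0 < e.re) : ‖e - 1‖ < ‖e + 1‖ := by
  have h1 : Complex.normSq (e - 1) < Complex.normSq (e + 1) := by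
    simp only [Complex.normSq_apply, Complex.sub_re, Complex.sub_im, Complex.add_re,
      Complex.add_im, Complex.one_re, Complex.one_im]
    nlinarith
  have := Complex.sq_norm (e - 1)
  have := Complex.sq_norm (e + 1)
  nlinarith [norm_nonneg (e - 1), norm_nonneg (e + 1)]

lemma slitE_mem_ball {w : ℂ} (hw : w ∈ slitS) : slitE w ∈ ball (0:ℂ) 1 := by
  rw [mem_ball_zero_iff, slitE, norm_div]
  have hd := abs_lt_abs_of_re_pos (slitS_re_exp_half_pos hw)
  rw [div_lt_one (lt_of_le_of_lt (norm_nonneg _) hd)]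
  exact hd

lemma slitA_mem_slitS {z : ℂ} (hz : z ∈ ball (0:ℂ) 1) : slitA z ∈ slitS := by
  rw [mem_ball_zero_iff] at hz
  have hz1 : z ≠ 1 := by intro h; rw [h] at hz; simp at hz
  have hne : (1 : ℂ) - z ≠ 0 := sub_ne_zero.mpr (Ne.symm hz1)
  have hre : 0 < ((1 + z)/(1 - z)).re := by
    rw [Complex.div_re]
    have hn : 0 < Complex.normSq (1 - z) := Complex.normSq_pos.mpr hne
    rw [← add_div, lt_div_iff₀ hn]
    have habs : z.re^2 + z.im^2 < 1 := by
      have h1 := Complex.sq_norm z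
      rw [Complex.normSq_apply] at h1
      nlinarith [norm_nonneg z]
    simp only [Complex.add_re, Complex.add_im, Complex.sub_re, Complex.sub_im,
      Complex.one_re, Complex.one_im]
    nlinarith
  have harg : |Complex.arg ((1 + z)/(1 - z))| < Real.pi / 2 :=
    Complex.abs_arg_lt_pi_div_two_iff.mpr (Or.inl hre)
  rw [abs_lt] at harg
  have him : (slitA z).im = 2 * Complex.arg ((1 + z)/(1 - z)) := by
    rw [slitA]
    simp [Complex.log_im]
  constructor <;> rw [him] <;> linarith [harg.1, harg.2]

lemma slitA_slitE {w : ℂ} (hw : w ∈ slitS) : slitA (slitE w) = w := by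
  have hd := slitE_denom_ne hw
  have h1 : (1 + slitE w)/(1 - slitE w) = Complex.exp (w/2) := by
    rw [slitE]
    field_simp
    ring
  rw [slitA, h1, Complex.log_exp]
  · ring
  · have : (w/2).im = w.im/2 := by simp [Complex.div_im]
    rw [this]; linarith [hw.1, Real.pi_pos]
  · have : (w/2).im = w.im/2 := by simp [Complex.div_im]
    rw [this]; linarith [hw.2, Real.pi_pos]

lemma slitE_zero : slitE 0 = 0 := by simp [slitE]

lemma slitA_zero : slitA 0 = 0 := by simp [slitA]

lemma slitE_differentiableAt {w : ℂ} (hw : Complex.exp (w/2) + 1 ≠ 0) :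
    DifferentiableAt ℂ slitE w := by
  apply DifferentiableAt.div
  · exact (Complex.differentiable_exp.differentiableAt.comp w
      ((differentiableAt_id.div_const 2))).sub (differentiableAt_const 1)
  · exact (Complex.differentiable_exp.differentiableAt.comp w
      ((differentiableAt_id.div_const 2))).add (differentiableAt_const 1)
  · exact hw

lemma slitA_differentiableAt {z : ℂ} (hz : z ∈ ball (0:ℂ) 1) :
    DifferentiableAt ℂ slitA z := by
  rw [mem_ball_zero_iff] at hz
  have hz1 : z ≠ 1 := by intro h; rw [h] at hz; simp at hz
  have hne : (1 : ℂ) - z ≠ 0 := sub_ne_zero.mpr (Ne.symm hz1)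
  have hre : 0 < ((1 + z)/(1 - z)).re := by
    rw [Complex.div_re]
    have hn : 0 < Complex.normSq (1 - z) := Complex.normSq_pos.mpr hne
    rw [← add_div, lt_div_iff₀ hn]
    have habs : z.re^2 + z.im^2 < 1 := by
      have h1 := Complex.sq_norm z
      rw [Complex.normSq_apply] at h1
      nlinarith [norm_nonneg z]
    simp only [Complex.add_re, Complex.add_im, Complex.sub_re, Complex.sub_im,
      Complex.one_re, Complex.one_im]
    nlinarith
  apply DifferentiableAt.const_mul
  apply DifferentiableAt.clog
  · exact (differentiableAt_const _ |>.add differentiableAt_id).div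
      ((differentiableAt_const _).sub differentiableAt_id) hne
  · exact Or.inl hre
noncomputable def slitEr (u : ℝ) : ℝ := (Real.exp (u/2) - 1) / (Real.exp (u/2) + 1)

lemma slitE_ofReal (u : ℝ) : slitE (u : ℂ) = ((slitEr u : ℝ) : ℂ) := by
  rw [slitE, slitEr]
  have h : ((u : ℂ)/2) = ((u/2 : ℝ) : ℂ) := by push_cast; ring
  rw [h, ← Complex.ofReal_exp]
  push_cast
  rfl

lemma slitEr_strictMono : StrictMono slitEr := by
  intro u v huv
  rw [slitEr, slitEr]
  have h1 := Real.exp_pos (u/2)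
  have h2 := Real.exp_pos (v/2)
  have h3 : Real.exp (u/2) < Real.exp (v/2) := Real.exp_lt_exp.mpr (by linarith)
  rw [div_lt_div_iff₀ (by linarith) (by linarith)]
  nlinarith

lemma slitEr_neg (u : ℝ) : slitEr (-u) = - slitEr u := by
  rw [slitEr, slitEr]
  have h1 := Real.exp_pos (u/2)
  have h2 : Real.exp (-u/2) = (Real.exp (u/2))⁻¹ := by
    rw [← Real.exp_neg]; congr 1; ring
  rw [h2]
  have h3 : Real.exp (u/2) + 1 > 0 := by linarith
  have h4 : (Real.exp (u/2))⁻¹ + 1 > 0 := by positivity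
  field_simp
  ring

lemma slitEr_zero : slitEr 0 = 0 := by simp [slitEr]

lemma abs_slitEr (u : ℝ) : |slitEr u| = slitEr |u| := by
  rcases le_or_gt 0 u with h | h
  · have hpos : 0 ≤ slitEr u := by
      have := slitEr_strictMono.monotone h
      rwa [slitEr_zero] at this
    rw [_root_.abs_of_nonneg h, _root_.abs_of_nonneg hpos]
  · have hneg : slitEr u < 0 := by
      have := slitEr_strictMono h
      rwa [slitEr_zero] at this
    rw [_root_.abs_of_neg h, _root_.abs_of_neg hneg, ← slitEr_neg]

lemma abs_le_of_abs_slitEr_le {u v : ℝ} (h : |slitEr u| ≤ |slitEr v|) : |u| ≤ |v| := by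
  by_contra hc
  push_neg at hc
  have := slitEr_strictMono hc
  rw [abs_slitEr, abs_slitEr] at h
  linarith

/-- Schwarz–Pick type contraction for holomorphic self-maps of the strip
`{|Im w| < π}` that are real on the real axis. -/
lemma strip_pick (g : ℂ → ℂ) (hg : ∀ w ∈ slitS, DifferentiableAt ℂ g w)
    (hmaps : MapsTo g slitS slitS) (hreal : ∀ x : ℝ, (g x).im = 0)
    (x y : ℝ) : |(g y).re - (g x).re| ≤ |y - x| := by
  have hπ := Real.pi_pos
  have hrealS : ∀ u : ℝ, (u : ℂ) ∈ slitS := fun u => by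
    constructor <;> simp <;> linarith
  -- membership chain
  have hchain : ∀ z ∈ ball (0:ℂ) 1, g ((x : ℂ) + slitA z) - g (x : ℂ) ∈ slitS := by
    intro z hz
    have h1 : (x : ℂ) + slitA z ∈ slitS := by
      have := slitA_mem_slitS hz
      constructor <;> simp only [Complex.add_im, Complex.ofReal_im, zero_add] <;>
        [exact this.1; exact this.2]
    have h2 := hmaps h1
    constructor <;> simp only [Complex.sub_im, hreal x, sub_zero] <;>
      [exact h2.1; exact h2.2]
  set H : ℂ → ℂ := fun z => slitE (g ((x : ℂ) + slitA z) - g (x : ℂ)) with hH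
  have hd : DifferentiableOn ℂ H (ball (0:ℂ) 1) := by
    intro z hz
    apply DifferentiableAt.differentiableWithinAt
    have h1 : (x : ℂ) + slitA z ∈ slitS := by
      have := slitA_mem_slitS hz
      constructor <;> simp only [Complex.add_im, Complex.ofReal_im, zero_add] <;>
        [exact this.1; exact this.2]
    exact (slitE_differentiableAt (slitE_denom_ne (hchain z hz))).comp z
      (((hg _ h1).comp z ((differentiableAt_const _).add (slitA_differentiableAt hz))).sub
        (differentiableAt_const _))
  have hm : MapsTo H (ball (0:ℂ) 1) (ball (0:ℂ) 1) := fun z hz =>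
    slitE_mem_ball (hchain z hz)
  have h0 : H 0 = 0 := by
    rw [hH]
    simp only [slitA_zero, add_zero, sub_self, slitE_zero]
  have hz' : ‖slitE ((y : ℂ) - (x : ℂ))‖ < 1 := by
    have : ((y : ℂ) - (x : ℂ)) = (((y - x : ℝ)) : ℂ) := by push_cast; ring
    rw [this, slitE_ofReal, Complex.norm_real, Real.norm_eq_abs]
    have := slitE_mem_ball (hrealS (y - x))
    rw [mem_ball_zero_iff, slitE_ofReal, Complex.norm_real, Real.norm_eq_abs] at this
    exact this
  have key := Complex.norm_le_norm_of_mapsTo_ball hd (hm.mono_right ball_subset_closedBall) h0 hz'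
  have hAE : slitA (slitE ((y : ℂ) - (x : ℂ))) = (y : ℂ) - (x : ℂ) := by
    apply slitA_slitE
    have : ((y : ℂ) - (x : ℂ)) = (((y - x : ℝ)) : ℂ) := by push_cast; ring
    rw [this]; exact hrealS _
  have hHval : H (slitE ((y : ℂ) - (x : ℂ))) = slitE (g (y:ℂ) - g (x:ℂ)) := by
    rw [hH]
    simp only []
    rw [hAE]
    congr 2
    ring_nf
  rw [hHval] at key
  -- both differences are real
  have hgy : g (y:ℂ) - g (x:ℂ) = (((g (y:ℂ)).re - (g (x:ℂ)).re : ℝ) : ℂ) := by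
    apply Complex.ext <;> simp [hreal x, hreal y]
  have hyx : (y : ℂ) - (x : ℂ) = (((y - x : ℝ)) : ℂ) := by push_cast; ring
  rw [hgy, hyx, slitE_ofReal, slitE_ofReal, Complex.norm_real, Real.norm_eq_abs, Complex.norm_real,
    Real.norm_eq_abs] at key
  exact abs_le_of_abs_slitEr_le key
noncomputable def PhiM (a b : ℝ) (z : ℂ) : ℂ := Complex.log ((z - a)/((b:ℂ) - z))
noncomputable def PsiM (a b : ℝ) (w : ℂ) : ℂ := ((a:ℂ) + b * Complex.exp w)/(1 + Complex.exp w)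

lemma ratio_re (a b : ℝ) (z : ℂ) :
    ((z - a)/((b:ℂ) - z)).re
      = ((z.re - a)*(b - z.re) - z.im^2)/Complex.normSq ((b:ℂ) - z) := by
  rw [Complex.div_re, ← add_div]
  congr 1
  simp only [Complex.sub_re, Complex.sub_im, Complex.ofReal_re, Complex.ofReal_im]
  ring

lemma ratio_im (a b : ℝ) (z : ℂ) :
    ((z - a)/((b:ℂ) - z)).im = z.im*(b - a)/Complex.normSq ((b:ℂ) - z) := by
  rw [Complex.div_im, div_sub_div_same]
  congr 1
  simp only [Complex.sub_re, Complex.sub_im, Complex.ofReal_re, Complex.ofReal_im]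
  ring

lemma mem_omega_iff {a b : ℝ} (hab : a < b) {z : ℂ} (hz : z ≠ (b:ℂ)) :
    (z.im ≠ 0 ∨ (a < z.re ∧ z.re < b)) ↔ ((z - a)/((b:ℂ) - z)) ∈ Complex.slitPlane := by
  have hn : 0 < Complex.normSq ((b:ℂ) - z) :=
    Complex.normSq_pos.mpr (sub_ne_zero.mpr (Ne.symm hz))
  rw [Complex.mem_slitPlane_iff, ratio_re, ratio_im]
  by_cases him : z.im = 0
  · have hzb : z.re ≠ b := by
      intro h; apply hz; apply Complex.ext <;> simp [him, h]
    simp only [him, ne_eq, not_true_eq_false, false_or, zero_mul, zero_div,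
      not_false_eq_true, or_false, zero_pow, sub_zero]
    rw [show (0:ℝ)^2 = 0 by norm_num]
    constructor
    · rintro ⟨h1, h2⟩
      have : 0 < (z.re - a)*(b - z.re) - 0 := by nlinarith
      exact div_pos this hn
    · intro h
      rw [lt_div_iff₀ hn, zero_mul] at h
      rcases le_or_gt z.re a with h1 | h1
      · exfalso; nlinarith
      · rcases le_or_gt b z.re with h2 | h2
        · exfalso; nlinarith
        · exact ⟨h1, h2⟩
  · constructor
    · intro _
      right
      apply div_ne_zero _ (ne_of_gt hn)
      exact mul_ne_zero him (by linarith)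
    · intro _; exact Or.inl him

lemma exp_ne_neg_one {w : ℂ} (hw : w ∈ slitS) : 1 + Complex.exp w ≠ 0 := by
  intro h
  have he : Complex.exp w = -1 := by linear_combination h
  have him : (Complex.exp w).im = 0 := by rw [he]; simp
  rw [Complex.exp_im] at him
  have hsin : Real.sin w.im = 0 := by
    rcases mul_eq_zero.mp him with h1 | h1
    · exact absurd h1 (ne_of_gt (Real.exp_pos _))
    · exact h1
  have him0 : w.im = 0 := by
    rcases Real.sin_eq_zero_iff_of_lt_of_lt hw.1 hw.2 |>.mp hsin with h1
    exact h1
  have hre : (Complex.exp w).re = Real.exp w.re := by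
    rw [Complex.exp_re, him0]; simp
  rw [he] at hre
  simp at hre
  linarith [Real.exp_pos w.re]

lemma exp_mem_slitPlane {w : ℂ} (hw : w ∈ slitS) : Complex.exp w ∈ Complex.slitPlane := by
  rw [Complex.mem_slitPlane_iff]
  by_cases him : (Complex.exp w).im = 0
  · left
    rw [Complex.exp_im] at him
    have hsin : Real.sin w.im = 0 := by
      rcases mul_eq_zero.mp him with h1 | h1
      · exact absurd h1 (ne_of_gt (Real.exp_pos _))
      · exact h1
    have him0 : w.im = 0 := Real.sin_eq_zero_iff_of_lt_of_lt hw.1 hw.2 |>.mp hsin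
    rw [Complex.exp_re, him0]
    simp [Real.exp_pos]
  · exact Or.inr him

lemma psi_sub_a (a b : ℝ) {w : ℂ} (hd : 1 + Complex.exp w ≠ 0) :
    PsiM a b w - a = ((b:ℂ) - a) * Complex.exp w/(1 + Complex.exp w) := by
  rw [PsiM]; field_simp; ring

lemma b_sub_psi (a b : ℝ) {w : ℂ} (hd : 1 + Complex.exp w ≠ 0) :
    (b:ℂ) - PsiM a b w = ((b:ℂ) - a)/(1 + Complex.exp w) := by
  rw [PsiM]; field_simp; ring

lemma psi_ratio {a b : ℝ} (hab : a < b) {w : ℂ} (hd : 1 + Complex.exp w ≠ 0) :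
    (PsiM a b w - a)/((b:ℂ) - PsiM a b w) = Complex.exp w := by
  have hba : ((b:ℂ) - a) ≠ 0 := by
    rw [sub_ne_zero]
    exact_mod_cast (ne_of_gt hab)
  rw [psi_sub_a a b hd, b_sub_psi a b hd]
  field_simp

lemma psi_ne_b {a b : ℝ} (hab : a < b) {w : ℂ} (hd : 1 + Complex.exp w ≠ 0) :
    PsiM a b w ≠ (b:ℂ) := by
  intro h
  have hba : ((b:ℂ) - a) ≠ 0 := by
    rw [sub_ne_zero]; exact_mod_cast (ne_of_gt hab)
  have := b_sub_psi a b hd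
  rw [h, sub_self] at this
  exact (div_ne_zero hba hd) this.symm

lemma psi_mem_omega {a b : ℝ} (hab : a < b) {w : ℂ} (hw : w ∈ slitS) :
    (PsiM a b w).im ≠ 0 ∨ (a < (PsiM a b w).re ∧ (PsiM a b w).re < b) := by
  have hd := exp_ne_neg_one hw
  rw [mem_omega_iff hab (psi_ne_b hab hd), psi_ratio hab hd]
  exact exp_mem_slitPlane hw

lemma phi_psi {a b : ℝ} (hab : a < b) {w : ℂ} (hw : w ∈ slitS) :
    PhiM a b (PsiM a b w) = w := by
  rw [PhiM, psi_ratio hab (exp_ne_neg_one hw), Complex.log_exp hw.1 (le_of_lt hw.2)]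

lemma omega_ne_b {a b : ℝ} {z : ℂ} (hz : z.im ≠ 0 ∨ (a < z.re ∧ z.re < b)) :
    z ≠ (b:ℂ) := by
  intro h
  rcases hz with h1 | h1
  · rw [h, Complex.ofReal_im] at h1; exact h1 rfl
  · rw [h, Complex.ofReal_re] at h1; exact absurd h1.2 (lt_irrefl b)

lemma phi_mem_slitS {a b : ℝ} (hab : a < b) {z : ℂ}
    (hz : z.im ≠ 0 ∨ (a < z.re ∧ z.re < b)) : PhiM a b z ∈ slitS := by
  have hzb := omega_ne_b hz
  have hr := (mem_omega_iff hab hzb).mp hz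
  have him : (PhiM a b z).im = Complex.arg ((z - a)/((b:ℂ) - z)) := by
    rw [PhiM, Complex.log_im]
  constructor
  · rw [him]; exact Complex.neg_pi_lt_arg _
  · rw [him]
    apply Complex.arg_lt_pi_iff.mpr
    rcases Complex.mem_slitPlane_iff.mp hr with h | h
    · exact Or.inl (le_of_lt h)
    · exact Or.inr h

lemma phi_differentiableAt {a b : ℝ} (hab : a < b) {z : ℂ}
    (hz : z.im ≠ 0 ∨ (a < z.re ∧ z.re < b)) : DifferentiableAt ℂ (PhiM a b) z := by
  have hzb := omega_ne_b hz
  have hne : (b:ℂ) - z ≠ 0 := sub_ne_zero.mpr (Ne.symm hzb)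
  have hr := (mem_omega_iff hab hzb).mp hz
  apply DifferentiableAt.clog
  · exact (differentiableAt_id.sub (differentiableAt_const _)).div
      ((differentiableAt_const _).sub differentiableAt_id) hne
  · exact hr

lemma psi_differentiableAt {a b : ℝ} {w : ℂ} (hd : 1 + Complex.exp w ≠ 0) :
    DifferentiableAt ℂ (PsiM a b) w := by
  apply DifferentiableAt.div
  · exact (differentiableAt_const _).add
      ((differentiableAt_const _).mul Complex.differentiable_exp.differentiableAt)
  · exact (differentiableAt_const _).add Complex.differentiable_exp.differentiableAt
  · exact hd
noncomputable def psir (a b : ℝ) (x : ℝ) : ℝ := (a + b * Real.exp x)/(1 + Real.exp x)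

lemma psir_mem {a b : ℝ} (hab : a < b) (x : ℝ) : psir a b x ∈ Set.Ioo a b := by
  have hE := Real.exp_pos x
  have hd : 0 < 1 + Real.exp x := by linarith
  constructor
  · rw [psir, lt_div_iff₀ hd]; nlinarith
  · rw [psir, div_lt_iff₀ hd]; nlinarith

lemma psiM_ofReal (a b : ℝ) (x : ℝ) : PsiM a b (x : ℂ) = ((psir a b x : ℝ) : ℂ) := by
  rw [PsiM, psir, ← Complex.ofReal_exp]
  push_cast
  ring

lemma psir_ratio {a b : ℝ} (hab : a < b) (x : ℝ) :
    (psir a b x - a)/(b - psir a b x) = Real.exp x := by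
  have hE := Real.exp_pos x
  have hd : (0:ℝ) < 1 + Real.exp x := by linarith
  have h1 : psir a b x - a = (b - a) * Real.exp x/(1 + Real.exp x) := by
    rw [psir]; field_simp; ring
  have h2 : b - psir a b x = (b - a)/(1 + Real.exp x) := by
    rw [psir]; field_simp; ring
  rw [h1, h2]
  rw [div_div_div_eq, mul_comm]
  rw [mul_div_mul_left _ _ (by linarith : (1:ℝ) + Real.exp x ≠ 0)]
  exact mul_div_cancel_left₀ _ (by linarith)

lemma psir_log_eq {a b : ℝ} (hab : a < b) (x : ℝ) :
    Real.log ((psir a b x - a)/(b - psir a b x)) = x := by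
  rw [psir_ratio hab, Real.log_exp]

lemma psir_of_log {a b : ℝ} (hab : a < b) {t : ℝ} (ht : t ∈ Set.Ioo a b) :
    psir a b (Real.log ((t - a)/(b - t))) = t := by
  have h1 : 0 < t - a := by linarith [ht.1]
  have h2 : 0 < b - t := by linarith [ht.2]
  have hpos : 0 < (t - a)/(b - t) := div_pos h1 h2
  rw [psir, Real.exp_log hpos]
  rw [div_eq_iff (by positivity : (0:ℝ) < 1 + (t - a)/(b - t)).ne']
  field_simp
  ring
/-- A holomorphic self-map of the doubly slit plane
`Ω = ℂ \ ((−∞, a] ∪ [b, +∞))` fixing `a` and `b` with derivative `1` at both,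
and preserving the interval `[a, b]`, must be the identity on `Ω`. -/
theorem slit_plane_two_parabolic_fixed_points (a b : ℝ) (hab : a < b)
    (Ω : Set ℂ) (hΩ : Ω = {z : ℂ | z.im ≠ 0 ∨ (a < z.re ∧ z.re < b)})
    (U : Set ℂ) (hU : IsOpen U) (hUΩ : Ω ∪ {(a : ℂ), (b : ℂ)} ⊆ U)
    (φ : ℂ → ℂ) (hφ : DifferentiableOn ℂ φ U)
    (hmaps : Set.MapsTo φ Ω Ω)
    (hseg : Set.MapsTo φ ((fun x : ℝ => (x : ℂ)) '' Set.Icc a b)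
      ((fun x : ℝ => (x : ℂ)) '' Set.Icc a b))
    (hfa : φ (a : ℂ) = (a : ℂ)) (hfb : φ (b : ℂ) = (b : ℂ))
    (hda : deriv φ (a : ℂ) = 1) (hdb : deriv φ (b : ℂ) = 1) :
    ∀ z ∈ Ω, φ z = z := by
  have haU : (a:ℂ) ∈ U := hUΩ (Or.inr (Set.mem_insert _ _))
  have hbU : (b:ℂ) ∈ U := hUΩ (Or.inr (Set.mem_insert_of_mem _ rfl))
  have hΩU : Ω ⊆ U := fun z hz => hUΩ (Or.inl hz)
  have hIooΩ : ∀ t : ℝ, t ∈ Set.Ioo a b → (t:ℂ) ∈ Ω := by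
    intro t ht
    rw [hΩ]
    right
    simp only [Complex.ofReal_re]
    exact ⟨ht.1, ht.2⟩
  set fre : ℝ → ℝ := fun t => (φ (t:ℂ)).re with hfre_def
  -- real values on the interval
  have hval : ∀ t ∈ Set.Ioo a b, φ (t:ℂ) = ((fre t : ℝ) : ℂ) ∧ fre t ∈ Set.Ioo a b := by
    intro t ht
    have htΩ : (t:ℂ) ∈ Ω := hIooΩ t ht
    obtain ⟨u, hu, huu⟩ := hseg ⟨t, ⟨le_of_lt ht.1, le_of_lt ht.2⟩, rfl⟩
    have hphiΩ : φ (t:ℂ) ∈ Ω := hmaps htΩ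
    have hre : fre t = u := by
      rw [hfre_def]
      simp only []
      rw [← huu, Complex.ofReal_re]
    have hphi : φ (t:ℂ) = ((fre t : ℝ) : ℂ) := by rw [hre]; exact huu.symm
    refine ⟨hphi, ?_⟩
    rw [hΩ] at hphiΩ
    rw [hphi] at hphiΩ
    rcases hphiΩ with h | h
    · rw [Complex.ofReal_im] at h; exact absurd rfl h
    · rw [Complex.ofReal_re] at h; exact h
  set g : ℂ → ℂ := fun w => PhiM a b (φ (PsiM a b w)) with hg_def
  have hSΩ : ∀ w ∈ slitS, PsiM a b w ∈ Ω := by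
    intro w hw; rw [hΩ]; exact psi_mem_omega hab hw
  have hφΩ' : ∀ w ∈ slitS, (φ (PsiM a b w)).im ≠ 0 ∨
      (a < (φ (PsiM a b w)).re ∧ (φ (PsiM a b w)).re < b) := by
    intro w hw
    have := hmaps (hSΩ w hw)
    rwa [hΩ] at this
  have hgdiff : ∀ w ∈ slitS, DifferentiableAt ℂ g w := by
    intro w hw
    have h := ((phi_differentiableAt hab (hφΩ' w hw)).comp w
      ((hφ.differentiableAt (hU.mem_nhds (hΩU (hSΩ w hw)))).comp w
        (psi_differentiableAt (exp_ne_neg_one hw))))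
    exact h
  have hgmaps : Set.MapsTo g slitS slitS := fun w hw => phi_mem_slitS hab (hφΩ' w hw)
  have hgval : ∀ x : ℝ, g (x:ℂ)
      = ((Real.log ((fre (psir a b x) - a)/(b - fre (psir a b x))) : ℝ) : ℂ) := by
    intro x
    have ht := psir_mem hab x
    obtain ⟨hphit, hfret⟩ := hval _ ht
    have hpos : (0:ℝ) < (fre (psir a b x) - a)/(b - fre (psir a b x)) :=
      div_pos (by linarith [hfret.1]) (by linarith [hfret.2])
    rw [hg_def]
    simp only []
    rw [psiM_ofReal, hphit, PhiM]
    rw [show ((fre (psir a b x) : ℝ):ℂ) - (a:ℂ) = ((fre (psir a b x) - a : ℝ) : ℂ) by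
      push_cast; ring]
    rw [show ((b:ℂ) - ((fre (psir a b x) : ℝ):ℂ)) = ((b - fre (psir a b x) : ℝ) : ℂ) by
      push_cast; ring]
    rw [← Complex.ofReal_div, ← Complex.ofReal_log hpos.le]
  have hgim : ∀ x : ℝ, (g (x:ℂ)).im = 0 := by
    intro x; rw [hgval x, Complex.ofReal_im]
  set G : ℝ → ℝ := fun x => (g (x:ℂ)).re with hG_def
  have hpick : ∀ x y : ℝ, |G y - G x| ≤ |y - x| := fun x y =>
    strip_pick g hgdiff hgmaps hgim x y
  set L : ℝ → ℝ := fun t =>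
    Real.log ((fre t - a)/(b - fre t)) - Real.log ((t - a)/(b - t)) with hL_def
  have hGL : ∀ x : ℝ, G x - x = L (psir a b x) := by
    intro x
    have h1 : G x = Real.log ((fre (psir a b x) - a)/(b - fre (psir a b x))) := by
      rw [hG_def]; simp only []; rw [hgval x, Complex.ofReal_re]
    rw [h1, hL_def]
    simp only []
    rw [psir_log_eq hab]
  -- continuity of fre at the endpoints
  have hfre_c : ∀ c : ℝ, (c:ℂ) ∈ U → φ (c:ℂ) = (c:ℂ) →
      Filter.Tendsto fre (nhdsWithin c (Set.Ioo a b)) (nhds c) := by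
    intro c hcU hc
    have hcb : ContinuousAt φ (c:ℂ) := (hφ.differentiableAt (hU.mem_nhds hcU)).continuousAt
    have h2 : Filter.Tendsto (fun t : ℝ => φ (t:ℂ)) (nhds c) (nhds (φ (c:ℂ))) :=
      hcb.tendsto.comp (Complex.continuous_ofReal.tendsto c)
    rw [hc] at h2
    have h3 := (Complex.continuous_re.tendsto _).comp h2
    have h4 : Filter.Tendsto fre (nhds c) (nhds c) := by
      simpa [hfre_def, Function.comp_def] using h3
    exact h4.mono_left nhdsWithin_le_nhds
  -- slope limits at the endpoints
  have hslope : ∀ c : ℝ, (c:ℂ) ∈ U → φ (c:ℂ) = (c:ℂ) → deriv φ (c:ℂ) = 1 →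
      c ∉ Set.Ioo a b →
      Filter.Tendsto (fun t : ℝ => (c - fre t)/(c - t))
        (nhdsWithin c (Set.Ioo a b)) (nhds 1) := by
    intro c hcU hc hdc hcnot
    have hD : HasDerivAt φ 1 (c:ℂ) := by
      have h1 := (hφ.differentiableAt (hU.mem_nhds hcU)).hasDerivAt
      rwa [hdc] at h1
    have hs := hasDerivAt_iff_tendsto_slope.mp hD
    have hof : Filter.Tendsto (fun t : ℝ => (t:ℂ))
        (nhdsWithin c (Set.Ioo a b)) (nhdsWithin (c:ℂ) {(c:ℂ)}ᶜ) := by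
      rw [tendsto_nhdsWithin_iff]
      constructor
      · exact (Complex.continuous_ofReal.tendsto c).mono_left nhdsWithin_le_nhds
      · filter_upwards [eventually_mem_nhdsWithin] with t ht
        simp only [Set.mem_compl_iff, Set.mem_singleton_iff]
        intro h
        exact hcnot (Complex.ofReal_inj.mp h ▸ ht)
    have hcomp := hs.comp hof
    have hEq : ∀ᶠ (t : ℝ) in nhdsWithin c (Set.Ioo a b),
        slope φ (c:ℂ) ((t:ℂ)) = (((c - fre t)/(c - t) : ℝ) : ℂ) := by
      filter_upwards [eventually_mem_nhdsWithin] with t ht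
      have htc : (t:ℂ) - (c:ℂ) ≠ 0 := by
        rw [sub_ne_zero]
        exact fun h => hcnot (Complex.ofReal_inj.mp h ▸ ht)
      have hct : (c:ℂ) - (t:ℂ) ≠ 0 := fun h => htc (by linear_combination -h)
      rw [slope_def_field, (hval t ht).1, hc]
      push_cast
      rw [div_eq_div_iff htc hct]
      ring
    have hcomp2 := hcomp.congr' hEq
    have h3 := (Complex.continuous_re.tendsto (1:ℂ)).comp hcomp2
    simp only [Complex.one_re] at h3
    exact h3.congr (fun t => Complex.ofReal_re _)
  -- L written via the product Q
  have hQ_eq : ∀ t ∈ Set.Ioo a b,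
      L t = Real.log (((fre t - a)/(t - a)) * ((b - t)/(b - fre t))) := by
    intro t ht
    obtain ⟨_, hf⟩ := hval t ht
    have h1 : (0:ℝ) < t - a := by linarith [ht.1]
    have h2 : (0:ℝ) < b - t := by linarith [ht.2]
    have h3 : (0:ℝ) < fre t - a := by linarith [hf.1]
    have h4 : (0:ℝ) < b - fre t := by linarith [hf.2]
    rw [hL_def]
    simp only []
    rw [show ((fre t - a)/(t - a)) * ((b - t)/(b - fre t))
        = ((fre t - a)/(b - fre t)) / ((t - a)/(b - t)) by
      field_simp]
    have hA : (0:ℝ) < (fre t - a)/(b - fre t) := div_pos h3 h4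
    have hB : (0:ℝ) < (t - a)/(b - t) := div_pos h1 h2
    conv_rhs => rw [Real.log_div hA.ne' hB.ne']
  -- Tendsto L at b
  have hLb : Filter.Tendsto L (nhdsWithin b (Set.Ioo a b)) (nhds 0) := by
    have hF1 : Filter.Tendsto (fun t => (fre t - a)/(t - a))
        (nhdsWithin b (Set.Ioo a b)) (nhds 1) := by
      have hnum := (hfre_c b hbU hfb).sub_const a
      have hden : Filter.Tendsto (fun t : ℝ => t - a)
          (nhdsWithin b (Set.Ioo a b)) (nhds (b - a)) :=
        ((continuous_id.sub continuous_const).tendsto b).mono_left nhdsWithin_le_nhds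
      have h5 := hnum.div hden (by linarith : b - a ≠ 0)
      rw [div_self (show b - a ≠ 0 by linarith)] at h5; exact h5
    have hr := hslope b hbU hfb hdb (fun h => absurd h.2 (lt_irrefl b))
    have hF2 : Filter.Tendsto (fun t => (b - t)/(b - fre t))
        (nhdsWithin b (Set.Ioo a b)) (nhds 1) := by
      have h2 := hr.inv₀ one_ne_zero
      rw [inv_one] at h2
      refine h2.congr (fun t => ?_)
      rw [inv_div]
    have hQ := hF1.mul hF2
    rw [one_mul] at hQ
    have hlog := (Real.continuousAt_log one_ne_zero).tendsto.comp hQ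
    rw [Real.log_one] at hlog
    apply hlog.congr'
    filter_upwards [eventually_mem_nhdsWithin] with t ht
    exact (hQ_eq t ht).symm
  -- Tendsto L at a
  have hLa : Filter.Tendsto L (nhdsWithin a (Set.Ioo a b)) (nhds 0) := by
    have hr := hslope a haU hfa hda (fun h => absurd h.1 (lt_irrefl a))
    have hF1 : Filter.Tendsto (fun t => (fre t - a)/(t - a))
        (nhdsWithin a (Set.Ioo a b)) (nhds 1) := by
      refine hr.congr (fun t => ?_)
      rw [show a - fre t = -(fre t - a) by ring, show a - t = -(t - a) by ring,
        neg_div_neg_eq]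
    have hF2 : Filter.Tendsto (fun t => (b - t)/(b - fre t))
        (nhdsWithin a (Set.Ioo a b)) (nhds 1) := by
      have hnum : Filter.Tendsto (fun t : ℝ => b - t)
          (nhdsWithin a (Set.Ioo a b)) (nhds (b - a)) :=
        ((continuous_const.sub continuous_id).tendsto a).mono_left nhdsWithin_le_nhds
      have hden : Filter.Tendsto (fun t : ℝ => b - fre t)
          (nhdsWithin a (Set.Ioo a b)) (nhds (b - a)) :=
        tendsto_const_nhds.sub (hfre_c a haU hfa)
      have h5 := hnum.div hden (by linarith : b - a ≠ 0)
      rw [div_self (show b - a ≠ 0 by linarith)] at h5; exact h5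
    have hQ := hF1.mul hF2
    rw [one_mul] at hQ
    have hlog := (Real.continuousAt_log one_ne_zero).tendsto.comp hQ
    rw [Real.log_one] at hlog
    apply hlog.congr'
    filter_upwards [eventually_mem_nhdsWithin] with t ht
    exact (hQ_eq t ht).symm
  -- psir tends to the endpoints
  have hψtop : Filter.Tendsto (psir a b) Filter.atTop (nhdsWithin b (Set.Ioo a b)) := by
    rw [tendsto_nhdsWithin_iff]
    constructor
    · have hfun : psir a b = fun x => b - (b - a)/(1 + Real.exp x) := by
        funext x
        have hd : (0:ℝ) < 1 + Real.exp x := by positivity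
        rw [psir]
        field_simp
        ring
      rw [hfun]
      have hdenom : Filter.Tendsto (fun x : ℝ => 1 + Real.exp x)
          Filter.atTop Filter.atTop :=
        Filter.tendsto_atTop_add_const_left _ 1 Real.tendsto_exp_atTop
      have h0 : Filter.Tendsto (fun x : ℝ => (b - a)/(1 + Real.exp x))
          Filter.atTop (nhds 0) := Filter.Tendsto.div_atTop tendsto_const_nhds hdenom
      simpa using tendsto_const_nhds.sub h0
    · exact Filter.Eventually.of_forall (psir_mem hab)
  have hψbot : Filter.Tendsto (psir a b) Filter.atBot (nhdsWithin a (Set.Ioo a b)) := by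
    rw [tendsto_nhdsWithin_iff]
    constructor
    · have hfun : psir a b = fun x => a + (b - a)*Real.exp x/(1 + Real.exp x) := by
        funext x
        have hd : (0:ℝ) < 1 + Real.exp x := by positivity
        rw [psir]
        field_simp
        ring
      rw [hfun]
      have hE : Filter.Tendsto Real.exp Filter.atBot (nhds 0) := Real.tendsto_exp_atBot
      have hnum : Filter.Tendsto (fun x : ℝ => (b - a)*Real.exp x)
          Filter.atBot (nhds ((b - a)*0)) := tendsto_const_nhds.mul hE
      have hden : Filter.Tendsto (fun x : ℝ => 1 + Real.exp x)
          Filter.atBot (nhds (1 + 0)) := tendsto_const_nhds.add hE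
      have hfrac := hnum.div hden (by norm_num)
      simpa using tendsto_const_nhds.add hfrac
    · exact Filter.Eventually.of_forall (psir_mem hab)
  have htop : Filter.Tendsto (fun x => G x - x) Filter.atTop (nhds 0) := by
    have h1 := hLb.comp hψtop
    exact h1.congr (fun x => (hGL x).symm)
  have hbot : Filter.Tendsto (fun x => G x - x) Filter.atBot (nhds 0) := by
    have h1 := hLa.comp hψbot
    exact h1.congr (fun x => (hGL x).symm)
  have hGx : ∀ x : ℝ, G x = x := by
    intro x
    have hmono : ∀ y : ℝ, x ≤ y → G y - y ≤ G x - x := by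
      intro y hy
      have h1 := hpick x y
      have h2 : G y - G x ≤ |G y - G x| := le_abs_self _
      rw [_root_.abs_of_nonneg (by linarith : (0:ℝ) ≤ y - x)] at h1
      linarith
    have hmono2 : ∀ y : ℝ, y ≤ x → G x - x ≤ G y - y := by
      intro y hy
      have h1 := hpick y x
      have h2 : G x - G y ≤ |G x - G y| := le_abs_self _
      rw [_root_.abs_of_nonneg (by linarith : (0:ℝ) ≤ x - y)] at h1
      linarith
    have h1 : (0:ℝ) ≤ G x - x := le_of_tendsto htop (by
      filter_upwards [Filter.eventually_ge_atTop x] with y hy using hmono y hy)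
    have h2 : G x - x ≤ 0 := ge_of_tendsto hbot (by
      filter_upwards [Filter.eventually_le_atBot x] with y hy using hmono2 y hy)
    linarith
  have hfix : ∀ t ∈ Set.Ioo a b, φ (t:ℂ) = (t:ℂ) := by
    intro t ht
    obtain ⟨hphit, hfret⟩ := hval t ht
    set x := Real.log ((t - a)/(b - t)) with hx
    have hps : psir a b x = t := psir_of_log hab ht
    have hGxx := hGx x
    have hGv : G x = Real.log ((fre t - a)/(b - fre t)) := by
      rw [hG_def]; simp only []; rw [hgval x, Complex.ofReal_re, hps]
    rw [hGv] at hGxx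
    have h1 : (0:ℝ) < (fre t - a)/(b - fre t) :=
      div_pos (by linarith [hfret.1]) (by linarith [hfret.2])
    have h2 : (0:ℝ) < (t - a)/(b - t) :=
      div_pos (by linarith [ht.1]) (by linarith [ht.2])
    have h3 : (fre t - a)/(b - fre t) = (t - a)/(b - t) := by
      have h4 := congrArg Real.exp hGxx
      rwa [Real.exp_log h1, hx, Real.exp_log h2] at h4
    have h4 : fre t = t := by
      rw [div_eq_div_iff (by linarith [hfret.2]) (by linarith [ht.2])] at h3
      have h5 : (fre t - t) * (b - a) = 0 := by linear_combination h3
      rcases mul_eq_zero.mp h5 with h | h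
      · linarith
      · linarith
    rw [hphit, h4]
  -- identity theorem
  have hΩopen : IsOpen Ω := by
    rw [hΩ, Set.setOf_or]
    have h1 : IsOpen {z : ℂ | z.im ≠ 0} := isOpen_ne.preimage Complex.continuous_im
    have h2 : IsOpen {z : ℂ | a < z.re ∧ z.re < b} :=
      (isOpen_Ioo : IsOpen (Set.Ioo a b)).preimage Complex.continuous_re
    exact h1.union h2
  have hpre : IsPreconnected Ω := by
    rw [hΩ]
    have hst : Convex ℝ {z : ℂ | a < z.re ∧ z.re < b} := by
      rw [show {z : ℂ | a < z.re ∧ z.re < b}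
          = {z : ℂ | a < z.re} ∩ {z : ℂ | z.re < b} by rfl]
      exact (convex_halfSpace_re_gt a).inter (convex_halfSpace_re_lt b)
    have hup : Convex ℝ {z : ℂ | 0 < z.im} := convex_halfSpace_im_gt 0
    have hdown : Convex ℝ {z : ℂ | z.im < 0} := convex_halfSpace_im_lt 0
    set m : ℝ := (a + b)/2 with hm_def
    have hm : m ∈ Set.Ioo a b := ⟨by rw [hm_def]; linarith, by rw [hm_def]; linarith⟩
    have hu1 : IsPreconnected ({z : ℂ | a < z.re ∧ z.re < b} ∪ {z : ℂ | 0 < z.im}) := by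
      apply IsPreconnected.union ((m:ℂ) + Complex.I)
      · constructor <;> simp [hm.1, hm.2]
      · simp
      · exact hst.isPreconnected
      · exact hup.isPreconnected
    have hu2 : IsPreconnected (({z : ℂ | a < z.re ∧ z.re < b} ∪ {z : ℂ | 0 < z.im})
        ∪ {z : ℂ | z.im < 0}) := by
      apply IsPreconnected.union ((m:ℂ) - Complex.I)
      · left; constructor <;> simp [hm.1, hm.2]
      · simp
      · exact hu1
      · exact hdown.isPreconnected
    have hsets : {z : ℂ | z.im ≠ 0 ∨ (a < z.re ∧ z.re < b)}
        = (({z : ℂ | a < z.re ∧ z.re < b} ∪ {z : ℂ | 0 < z.im}) ∪ {z : ℂ | z.im < 0}) := by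
      ext z
      simp only [Set.mem_union, Set.mem_setOf_eq]
      constructor
      · rintro (h | h)
        · rcases lt_or_gt_of_ne h with hlt | hgt
          · right; exact hlt
          · left; right; exact hgt
        · left; left; exact h
      · rintro ((h | h) | h)
        · right; exact h
        · left; exact ne_of_gt h
        · left; exact ne_of_lt h
    rw [hsets]
    exact hu2
  have hφan : AnalyticOnNhd ℂ φ Ω := (hφ.analyticOnNhd hU).mono hΩU
  have hidan : AnalyticOnNhd ℂ (fun z : ℂ => z) Ω := analyticOnNhd_id
  have hm : (a + b)/2 ∈ Set.Ioo a b := ⟨by linarith, by linarith⟩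
  have hfreq : ∃ᶠ z in nhdsWithin (((a + b)/2 : ℝ):ℂ) {(((a + b)/2 : ℝ):ℂ)}ᶜ,
      φ z = z := by
    have hofm : Filter.Tendsto (fun t : ℝ => (t:ℂ))
        (nhdsWithin ((a + b)/2) {((a + b)/2 : ℝ)}ᶜ)
        (nhdsWithin (((a + b)/2 : ℝ):ℂ) {(((a + b)/2 : ℝ):ℂ)}ᶜ) := by
      rw [tendsto_nhdsWithin_iff]
      constructor
      · exact (Complex.continuous_ofReal.tendsto _).mono_left nhdsWithin_le_nhds
      · filter_upwards [eventually_mem_nhdsWithin] with t ht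
        simp only [Set.mem_compl_iff, Set.mem_singleton_iff] at *
        exact fun h => ht (Complex.ofReal_inj.mp h)
    have hev : ∀ᶠ (t : ℝ) in nhdsWithin ((a + b)/2) {((a + b)/2 : ℝ)}ᶜ,
        φ (↑t:ℂ) = (↑t:ℂ) := by
      have hIoo : Set.Ioo a b ∈ nhds ((a + b)/2) := Ioo_mem_nhds hm.1 hm.2
      have hev2 : ∀ᶠ (t : ℝ) in nhdsWithin ((a + b)/2) {((a + b)/2 : ℝ)}ᶜ,
          t ∈ Set.Ioo a b :=
        eventually_nhdsWithin_of_eventually_nhds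
          (Filter.eventually_of_mem hIoo fun t ht => ht)
      filter_upwards [hev2] with t ht using hfix t ht
    exact hofm.frequently hev.frequently
  have heq := hφan.eqOn_of_preconnected_of_frequently_eq hidan hpre
    (hIooΩ _ hm) hfreq
  intro z hz
  exact heq hz
end
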